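/- Let π be a permutation of {1,...,n} avoiding 213 and 231, and suppose σ is a (213,231)-avoiding permutation of {1,...,k}. If the binary word Φ(σ) occurs as a subsequence of the binary word Φ(π), then σ is contained as a pattern in π; moreover the greedy leftmost embedding of Φ(σ) into Φ(π) yields an occurrence of σ in π. Here Φ(τ) is the word whose i-th letter is 1 if τ(i) < τ(i+1) and 0 otherwise, and if a subsequence of positions i₁ < ... < i_{k-1} of Φ(π) matches Φ(σ) letterwise, then the subsequence π(i₁), ..., π(i_{k-1}), π(n') for any n' > i_{k-1} with appropriate final letter is an occurrence of σ. -/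

import Mathlib

def Contains213 {n : ℕ} (π : Equiv.Perm (Fin n)) : Prop :=
  ∃ i j k : Fin n, i < j ∧ j < k ∧ π j < π i ∧ π i < π k

def Contains231 {n : ℕ} (π : Equiv.Perm (Fin n)) : Prop :=
  ∃ i j k : Fin n, i < j ∧ j < k ∧ π k < π i ∧ π i < π j

def Av213231 {n : ℕ} (π : Equiv.Perm (Fin n)) : Prop :=
  ¬ Contains213 π ∧ ¬ Contains231 π

def ContainsPat {k n : ℕ} (σ : Equiv.Perm (Fin k)) (π : Equiv.Perm (Fin n)) : Prop :=
  ∃ f : Fin k → Fin n, StrictMono f ∧ ∀ a b : Fin k, σ a < σ b ↔ π (f a) < π (f b)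

def ascWord {m : ℕ} (τ : Equiv.Perm (Fin (m + 1))) : List Bool :=
  List.ofFn (fun i : Fin m => decide (τ i.castSucc < τ i.succ))

lemma key_lemma {n : ℕ} (π : Equiv.Perm (Fin (n + 1))) (hπ : Av213231 π) :
    ∀ (i : Fin n) (j : Fin (n + 1)), i.succ ≤ j →
      (π i.castSucc < π j ↔ π i.castSucc < π i.succ) := by
  intro i j hij
  rcases eq_or_lt_of_le hij with h | h
  · rw [h]
  constructor
  · intro hlt
    by_contra hnot
    have hne : π i.succ ≠ π i.castSucc := by
      intro he
      exact absurd (π.injective he) (by simp [Fin.ext_iff])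
    have h1 : π i.succ < π i.castSucc := lt_of_le_of_ne (not_lt.mp hnot) hne
    exact hπ.1 ⟨i.castSucc, i.succ, j, Fin.castSucc_lt_succ, h, h1, hlt⟩
  · intro hlt
    by_contra hnot
    have hne : π j ≠ π i.castSucc := by
      intro he
      exact absurd (π.injective he) (ne_of_gt (lt_trans Fin.castSucc_lt_succ h))
    have h1 : π j < π i.castSucc := lt_of_le_of_ne (not_lt.mp hnot) hne
    exact hπ.2 ⟨i.castSucc, i.succ, j, Fin.castSucc_lt_succ, h, h1, hlt⟩

/-- If `σ` and `π` are (213,231)-avoiding and the ascent/descent word of `σ`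
is a subsequence of that of `π`, then `π` contains `σ` as a pattern. -/
theorem contains_of_ascWord_sublist (k n : ℕ)
    (σ : Equiv.Perm (Fin (k + 1))) (π : Equiv.Perm (Fin (n + 1)))
    (hσ : Av213231 σ) (hπ : Av213231 π)
    (hsub : (ascWord σ).Sublist (ascWord π)) :
    ContainsPat σ π := by
  rw [List.sublist_iff_exists_fin_orderEmbedding_get_eq] at hsub
  obtain ⟨f, hf⟩ := hsub
  -- lengths
  have hlσ : (ascWord σ).length = k := by simp [ascWord]
  have hlπ : (ascWord π).length = n := by simp [ascWord]
  -- reindex f to Fin k ↪o Fin n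
  set f' : Fin k → Fin n := fun a => Fin.cast hlπ (f (Fin.cast hlσ.symm a)) with hf'
  have hf'mono : StrictMono f' := by
    intro a b hab
    simp only [hf']
    exact f.strictMono hab
  have hword : ∀ a : Fin k,
      (σ a.castSucc < σ a.succ ↔ π (f' a).castSucc < π (f' a).succ) := by
    intro a
    have := hf (Fin.cast hlσ.symm a)
    simp only [ascWord, List.get_ofFn] at this
    exact decide_eq_decide.mp this
  -- define g : Fin (k+1) → Fin (n+1)
  set g : Fin (k + 1) → Fin (n + 1) := fun a =>
    if h : a.val < k then (f' ⟨a.val, h⟩).castSucc else Fin.last n with hg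
  have hgmono : StrictMono g := by
    intro a b hab
    simp only [hg]
    by_cases hb : b.val < k
    · have ha : a.val < k := lt_trans hab hb
      rw [dif_pos ha, dif_pos hb]
      exact Fin.castSucc_lt_castSucc_iff.mpr (hf'mono hab)
    · rw [dif_neg hb]
      by_cases ha : a.val < k
      · rw [dif_pos ha]
        exact Fin.castSucc_lt_last _
      · exfalso
        have : a.val = k := le_antisymm (Nat.lt_succ_iff.mp a.isLt) (not_lt.mp ha)
        have : b.val = k := le_antisymm (Nat.lt_succ_iff.mp b.isLt) (not_lt.mp hb)
        omega
  -- main comparison for a < b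
  have hmain : ∀ a b : Fin (k + 1), a < b → (σ a < σ b ↔ π (g a) < π (g b)) := by
    intro a b hab
    have ha : a.val < k := by
      have := b.isLt; have := hab; omega
    set a' : Fin k := ⟨a.val, ha⟩ with ha'
    have hacast : a = a'.castSucc := by ext; rfl
    have hga : g a = (f' a').castSucc := by simp [hg, ha]; rfl
    have h1 : σ a < σ b ↔ σ a'.castSucc < σ a'.succ := by
      rw [hacast]
      exact key_lemma σ hσ a' b (by rw [Fin.le_def, Fin.val_succ]; exact hab)
    have h2 : π (g a) < π (g b) ↔ π (f' a').castSucc < π (f' a').succ := by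
      rw [hga]
      refine key_lemma π hπ (f' a') (g b) ?_
      have : g a < g b := hgmono hab
      rw [hga] at this
      exact this
    rw [h1, h2, hword a']
  refine ⟨g, hgmono, ?_⟩
  intro a b
  rcases lt_trichotomy a b with h | h | h
  · exact hmain a b h
  · subst h; simp
  · have h2 := hmain b a h
    have hne1 : σ a ≠ σ b := fun he => absurd (σ.injective he) (ne_of_gt h)
    have hne2 : π (g a) ≠ π (g b) := fun he =>
      absurd (π.injective (hgmono.injective.eq_iff.mp (π.injective he) ▸ he)) (by
        intro _; exact absurd (hgmono.injective (π.injective he)) (ne_of_gt h))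
    constructor
    · intro hl
      rcases lt_or_ge (π (g a)) (π (g b)) with h3 | h3
      · exact h3
      · exact absurd (h2.mpr (lt_of_le_of_ne h3 (Ne.symm hne2))) (not_lt.mpr (le_of_lt hl))
    · intro hl
      rcases lt_or_ge (σ a) (σ b) with h3 | h3
      · exact h3
      · exact absurd (h2.mp (lt_of_le_of_ne h3 (Ne.symm hne1))) (not_lt.mpr (le_of_lt hl))
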